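/- If (a_n) is a weakly density lifting invariant (weakly dli) arithmetic sequence, then t^s_{(d_n)}(T) ≠ t_{(d_n)}(T). -/

import Mathlib

open Filter Topology Set

noncomputable section

/-- The sequence of ratios `b n = a n / a (n-1)` of an arithmetic sequence. -/
def ratios (a : ℕ → ℕ) (n : ℕ) : ℕ := a n / a (n - 1)

/-- An arithmetic sequence: `a 0 = 1`, strictly increasing, each term divides the next. -/
def IsArithSeq (a : ℕ → ℕ) : Prop :=
  a 0 = 1 ∧ (∀ n, a n < a (n + 1)) ∧ (∀ n, a n ∣ a (n + 1))

/-- The indices `n_k` with `a k = d (n k)`: `n 0 = 1`, `n (k+1) = n k + (b (k+1) - 1)`. -/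
def nseq (a : ℕ → ℕ) : ℕ → ℕ
  | 0 => 1
  | k + 1 => nseq a k + (ratios a (k + 1) - 1)

/-- The lifting function `L(A) = ⋃_{k ∈ A} [n_{k-1}, n_k - 1]`. -/
def liftSet (a : ℕ → ℕ) (A : Set ℕ) : Set ℕ :=
  ⋃ k ∈ A, Set.Icc (nseq a (k - 1)) (nseq a k - 1)

/-- `A ⊆ ℕ` has natural density `δ`. -/
def HasDensity (A : Set ℕ) (δ : ℝ) : Prop :=
  Tendsto (fun n : ℕ => ((A ∩ Set.Iio n).ncard : ℝ) / n) atTop (𝓝 δ)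

/-- The upper natural density of `A ⊆ ℕ`. -/
def upperDensity (A : Set ℕ) : ℝ :=
  limsup (fun n : ℕ => ((A ∩ Set.Iio n).ncard : ℝ) / n) atTop

/-- The sequence `(d n)`: the increasing enumeration of `{r * a k : k ≥ 0, 1 ≤ r < b (k+1)}`. -/
def dSeq (a : ℕ → ℕ) : ℕ → ℕ :=
  Nat.nth (fun m => ∃ k r : ℕ, 1 ≤ r ∧ r < ratios a (k + 1) ∧ m = r * a k)

/-- The characterized subgroup `t_{(u n)}(𝕋)`. -/
def charSub (u : ℕ → ℤ) : Set (AddCircle (1 : ℝ)) :=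
  {x | Tendsto (fun n => u n • x) atTop (𝓝 0)}

/-- The statistically characterized subgroup `t^s_{(u n)}(𝕋)`. -/
def statChar (u : ℕ → ℤ) : Set (AddCircle (1 : ℝ)) :=
  {x | ∀ ε : ℝ, 0 < ε → HasDensity {n : ℕ | ε ≤ ‖u n • x‖} 0}

/-- Density lifting invariant. -/
def Dli (a : ℕ → ℕ) : Prop :=
  ∀ A : Set ℕ, A.Infinite → HasDensity A 0 → HasDensity (liftSet a A) 0

/-- Weakly density lifting invariant. -/
def WeaklyDli (a : ℕ → ℕ) : Prop :=
  ∃ A : Set ℕ, A.Infinite ∧ ∀ m : ℕ, HasDensity (liftSet a ((fun x => x - m) '' A)) 0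

/-- Strongly non density lifting invariant. -/
def StronglyNonDli (a : ℕ → ℕ) : Prop :=
  ∀ A : Set ℕ, A.Infinite → 0 < upperDensity (liftSet a A)

def dPred (a : ℕ → ℕ) (m : ℕ) : Prop :=
  ∃ k r : ℕ, 1 ≤ r ∧ r < ratios a (k + 1) ∧ m = r * a k

lemma dSeq_eq (a : ℕ → ℕ) : dSeq a = Nat.nth (dPred a) := rfl

section Aux
variable {a : ℕ → ℕ} (ha : IsArithSeq a)
include ha

lemma a_mono : StrictMono a := strictMono_nat_of_lt_succ ha.2.1

lemma a_pos (n : ℕ) : 0 < a n := by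
  have := (a_mono ha).monotone (Nat.zero_le n)
  rw [ha.1] at this
  omega

lemma ratios_mul (k : ℕ) : a (k + 1) = ratios a (k + 1) * a k := by
  show a (k+1) = a (k+1) / a ((k+1)-1) * a k
  simp only [Nat.add_sub_cancel]
  rw [Nat.div_mul_cancel (ha.2.2 k)]

lemma two_le_ratios (k : ℕ) : 2 ≤ ratios a (k + 1) := by
  by_contra hcon
  have h1 : ratios a (k + 1) ≤ 1 := by omega
  have h2 := ha.2.1 k
  rw [ratios_mul ha k] at h2
  nlinarith [a_pos ha k]

lemma a_dvd {k l : ℕ} (h : k ≤ l) : a k ∣ a l := by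
  induction l, h using Nat.le_induction with
  | base => exact dvd_rfl
  | succ n hn ih => exact ih.trans (ha.2.2 n)

lemma a_growth (k j : ℕ) : a k * 2 ^ j ≤ a (k + j) := by
  induction j with
  | zero => simp
  | succ m ih =>
      have h2 : 2 * a (k + m) ≤ a (k + m + 1) := by
        rw [ratios_mul ha (k + m)]
        exact Nat.mul_le_mul_right _ (two_le_ratios ha (k + m))
      have : a k * 2 ^ (m + 1) = a k * 2 ^ m * 2 := by ring
      rw [this]
      calc a k * 2 ^ m * 2 ≤ a (k + m) * 2 := Nat.mul_le_mul_right _ ih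
        _ ≤ a (k + m + 1) := by omega

lemma two_pow_le (k : ℕ) : 2 ^ k ≤ a k := by
  have := a_growth ha 0 k
  simpa [ha.1] using this

lemma dPred_mul {k r : ℕ} (h1 : 1 ≤ r) (h2 : r < ratios a (k + 1)) :
    a k ≤ r * a k ∧ r * a k < a (k + 1) := by
  constructor
  · exact Nat.le_mul_of_pos_left _ h1
  · rw [ratios_mul ha k]
    exact Nat.mul_lt_mul_of_lt_of_le h2 le_rfl (a_pos ha k)

lemma dPred_a (k : ℕ) : dPred a (a k) :=
  ⟨k, 1, le_refl 1, lt_of_lt_of_le one_lt_two (two_le_ratios ha k), (one_mul _).symm⟩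

lemma dPred_infinite : (setOf (dPred a)).Infinite :=
  Set.infinite_of_injective_forall_mem (a_mono ha).injective (fun k => dPred_a ha k)

lemma dPred_interval {m k : ℕ} (hm : dPred a m) (h1 : a k ≤ m) (h2 : m < a (k + 1)) :
    ∃ r, 1 ≤ r ∧ r < ratios a (k + 1) ∧ m = r * a k := by
  obtain ⟨j, r, hr1, hr2, rfl⟩ := hm
  obtain ⟨hj1, hj2⟩ := dPred_mul ha hr1 hr2
  have hjk : j = k := by
    have e1 : j < k + 1 := (a_mono ha).lt_iff_lt.mp (lt_of_le_of_lt hj1 h2)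
    have e2 : k < j + 1 := (a_mono ha).lt_iff_lt.mp (lt_of_le_of_lt h1 hj2)
    omega
  exact ⟨r, hr1, by rw [← hjk]; exact hr2, by rw [hjk]⟩

omit ha in
lemma nseq_succ (k : ℕ) : nseq a (k + 1) = nseq a k + (ratios a (k + 1) - 1) := rfl

open Classical in
lemma count_a : ∀ k, Nat.count (dPred a) (a k) + 1 = nseq a k := by
  intro k
  induction k with
  | zero =>
      rw [ha.1]
      have h0 : ¬ dPred a 0 := by
        rintro ⟨k, r, h1, h2, h3⟩
        have := a_pos ha k
        nlinarith
      simp [Nat.count_succ, Nat.count_zero, h0, nseq]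
  | succ k ih =>
      have hsplit : Nat.count (dPred a) (a (k + 1)) =
          Nat.count (dPred a) (a k) + (ratios a (k + 1) - 1) := by
        rw [Nat.count_eq_card_filter_range, Nat.count_eq_card_filter_range]
        have hr : Finset.range (a (k + 1)) =
            Finset.range (a k) ∪ Finset.Ico (a k) (a (k + 1)) := by
          rw [Finset.range_eq_Ico, Finset.range_eq_Ico]
          exact (Finset.Ico_union_Ico_eq_Ico (Nat.zero_le _) (le_of_lt (ha.2.1 k))).symm
        rw [hr, Finset.filter_union, Finset.card_union_of_disjoint]
        · congr 1
          have himg : (Finset.Ico (a k) (a (k + 1))).filter (dPred a) =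
              (Finset.Ico 1 (ratios a (k + 1))).image (· * a k) := by
            ext m
            simp only [Finset.mem_filter, Finset.mem_Ico, Finset.mem_image]
            constructor
            · rintro ⟨⟨hm1, hm2⟩, hm⟩
              obtain ⟨r, hr1, hr2, rfl⟩ := dPred_interval ha hm hm1 hm2
              exact ⟨r, ⟨hr1, hr2⟩, rfl⟩
            · rintro ⟨r, ⟨hr1, hr2⟩, rfl⟩
              exact ⟨dPred_mul ha hr1 hr2, ⟨k, r, hr1, hr2, rfl⟩⟩
          rw [himg, Finset.card_image_of_injective _
            (fun x y h => Nat.eq_of_mul_eq_mul_right (a_pos ha k) h), Nat.card_Ico]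
        · rw [Finset.disjoint_left]
          intro m hm1 hm2
          simp only [Finset.mem_filter, Finset.mem_range, Finset.mem_Ico] at hm1 hm2
          omega
      rw [hsplit, nseq_succ]
      have := two_le_ratios ha k
      omega

lemma nseq_strictMono : StrictMono (nseq a) := by
  apply strictMono_nat_of_lt_succ
  intro k
  rw [nseq_succ]
  have := two_le_ratios ha k
  omega

lemma le_nseq (k : ℕ) : k + 1 ≤ nseq a k := by
  induction k with
  | zero => simp [nseq]
  | succ m ih =>
      have h2 : nseq a m < nseq a (m + 1) := nseq_strictMono ha (Nat.lt_succ_self m)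
      omega

open Classical in
lemma dSeq_block {n k : ℕ} (h1 : nseq a k ≤ n + 1) (h2 : n + 1 < nseq a (k + 1)) :
    ∃ r, 1 ≤ r ∧ r < ratios a (k + 1) ∧ dSeq a n = r * a k := by
  have hinf := dPred_infinite ha
  have hc1 : Nat.count (dPred a) (a k) ≤ n := by have := count_a ha k; omega
  have hc2 : n < Nat.count (dPred a) (a (k + 1)) := by have := count_a ha (k + 1); omega
  have hb1 : a k ≤ Nat.nth (dPred a) n := (Nat.count_le_iff_le_nth hinf).mp hc1
  have hb2 : Nat.nth (dPred a) n < a (k + 1) := (Nat.lt_nth_iff_count_lt hinf).mp hc2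
  rw [dSeq_eq]
  exact dPred_interval ha (Nat.nth_mem_of_infinite hinf n) hb1 hb2

lemma exists_level (n : ℕ) : ∃ k, nseq a k ≤ n + 1 ∧ n + 1 < nseq a (k + 1) := by
  have hne : ∃ k, n + 1 < nseq a k := ⟨n + 1, by have := le_nseq ha (n + 1); omega⟩
  classical
  have hK : n + 1 < nseq a (Nat.find hne) := Nat.find_spec hne
  have hK0 : Nat.find hne ≠ 0 := by
    intro h0
    rw [h0] at hK
    simp [nseq] at hK
  refine ⟨Nat.find hne - 1, ?_, ?_⟩
  · have := Nat.find_min hne (m := Nat.find hne - 1) (by omega)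
    omega
  · have h1 : Nat.find hne - 1 + 1 = Nat.find hne := by omega
    rw [h1]
    exact hK

end Aux

lemma densZero_mono {B C : Set ℕ} (h : B ⊆ C) (hC : HasDensity C 0) : HasDensity B 0 := by
  apply squeeze_zero (fun n => by positivity) _ hC
  intro n
  rcases Nat.eq_zero_or_pos n with rfl | hn
  · simp
  have hfin : (C ∩ Set.Iio n).Finite := (Set.finite_Iio n).inter_of_right _
  have hle : (B ∩ Set.Iio n).ncard ≤ (C ∩ Set.Iio n).ncard :=
    Set.ncard_le_ncard (Set.inter_subset_inter_left _ h) hfin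
  exact (div_le_div_iff_of_pos_right (by exact_mod_cast hn)).mpr (by exact_mod_cast hle)

lemma densZero_union {B C : Set ℕ} (hB : HasDensity B 0) (hC : HasDensity C 0) :
    HasDensity (B ∪ C) 0 := by
  have := hB.add hC
  rw [add_zero] at this
  apply squeeze_zero (fun n => by positivity) _ this
  intro n
  rcases Nat.eq_zero_or_pos n with rfl | hn
  · simp
  have hfinB : (B ∩ Set.Iio n).Finite := (Set.finite_Iio n).inter_of_right _
  have hfinC : (C ∩ Set.Iio n).Finite := (Set.finite_Iio n).inter_of_right _
  have hle : ((B ∪ C) ∩ Set.Iio n).ncard ≤ (B ∩ Set.Iio n).ncard + (C ∩ Set.Iio n).ncard := by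
    rw [Set.union_inter_distrib_right]
    exact Set.ncard_union_le _ _
  rw [← add_div]
  exact (div_le_div_iff_of_pos_right (by exact_mod_cast hn)).mpr (by exact_mod_cast hle)

lemma densZero_finite {F : Set ℕ} (h : F.Finite) : HasDensity F 0 := by
  apply squeeze_zero (fun n => by positivity) _ (tendsto_const_div_atTop_nhds_zero_nat (F.ncard : ℝ))
  intro n
  rcases Nat.eq_zero_or_pos n with rfl | hn
  · simp
  have hle : (F ∩ Set.Iio n).ncard ≤ F.ncard :=
    Set.ncard_le_ncard Set.inter_subset_left h
  exact (div_le_div_iff_of_pos_right (by exact_mod_cast hn)).mpr (by exact_mod_cast hle)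

lemma densZero_biUnion {M : ℕ} {f : ℕ → Set ℕ} (h : ∀ m < M, HasDensity (f m) 0) :
    HasDensity (⋃ m ∈ Finset.range M, f m) 0 := by
  induction M with
  | zero => simpa using densZero_finite (Set.finite_empty)
  | succ K ih =>
      have : (⋃ m ∈ Finset.range (K + 1), f m) = (⋃ m ∈ Finset.range K, f m) ∪ f K := by
        simp [Finset.range_add_one, Set.biUnion_insert, Set.union_comm]
      rw [this]
      exact densZero_union (ih (fun m hm => h m (by omega))) (h K (by omega))

section KS
variable {a ks : ℕ → ℕ}

def xval (a ks : ℕ → ℕ) : ℝ := ∑' i, ((a (ks i) : ℝ))⁻¹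

def tailv (a ks : ℕ → ℕ) (i0 : ℕ) : ℝ := ∑' j, ((a (ks (j + i0)) : ℝ))⁻¹

variable (ha : IsArithSeq a) (hks0 : 1 ≤ ks 0) (hks : ∀ i, ks i + 5 ≤ ks (i + 1))

include hks in
lemma ks_add (i j : ℕ) : ks i + j ≤ ks (i + j) := by
  induction j with
  | zero => simp
  | succ m ih =>
      have h2 := hks (i + m)
      have he : i + (m + 1) = i + m + 1 := rfl
      rw [he]
      omega

include hks0 hks in
lemma ks_ge (i : ℕ) : i + 1 ≤ ks i := by
  have := ks_add hks 0 i
  simp at this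
  omega

include ha hks0 hks in
lemma pow_le_aks (i : ℕ) : 2 ^ i ≤ a (ks i) := by
  calc 2 ^ i ≤ 2 ^ ks i := Nat.pow_le_pow_right (by omega) (by have := ks_ge hks0 hks i; omega)
    _ ≤ a (ks i) := two_pow_le ha (ks i)

include ha hks0 hks in
lemma summable_x : Summable (fun i => ((a (ks i) : ℝ))⁻¹) := by
  apply Summable.of_nonneg_of_le (fun i => by positivity) (fun i => ?_) summable_geometric_two
  have h1 : (2:ℝ) ^ i ≤ (a (ks i) : ℝ) := by exact_mod_cast pow_le_aks ha hks0 hks i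
  have h2 : ((1:ℝ) / 2) ^ i = ((2:ℝ) ^ i)⁻¹ := by
    rw [div_pow, one_pow, one_div]
  rw [h2]
  exact inv_anti₀ (by positivity) h1

include ha hks0 hks in
lemma tail_summable (i0 : ℕ) : Summable (fun j => ((a (ks (j + i0)) : ℝ))⁻¹) :=
  (summable_nat_add_iff i0).mpr (summable_x ha hks0 hks)

lemma tail_nonneg (i0 : ℕ) : 0 ≤ tailv a ks i0 :=
  tsum_nonneg (fun j => by positivity)

include ha hks0 hks in
lemma tail_le (i0 : ℕ) : tailv a ks i0 ≤ ((a (ks i0) : ℝ))⁻¹ * 2 := by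
  have hterm : ∀ j, ((a (ks (j + i0)) : ℝ))⁻¹ ≤ ((a (ks i0) : ℝ))⁻¹ * ((1:ℝ)/2) ^ j := by
    intro j
    have h1 : a (ks i0) * 2 ^ j ≤ a (ks (j + i0)) := by
      calc a (ks i0) * 2 ^ j ≤ a (ks i0 + j) := a_growth ha (ks i0) j
        _ ≤ a (ks (j + i0)) := by
            apply (a_mono ha).monotone
            rw [add_comm j i0]
            exact ks_add hks i0 j
    have h1' : ((a (ks i0) : ℝ)) * 2 ^ j ≤ ((a (ks (j + i0)) : ℝ)) := by exact_mod_cast h1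
    have hpos : (0:ℝ) < (a (ks i0) : ℝ) * 2 ^ j := by
      have := a_pos ha (ks i0)
      positivity
    calc ((a (ks (j + i0)) : ℝ))⁻¹ ≤ (((a (ks i0) : ℝ)) * 2 ^ j)⁻¹ := inv_anti₀ hpos h1'
      _ = ((a (ks i0) : ℝ))⁻¹ * ((1:ℝ)/2) ^ j := by
          rw [mul_inv, div_pow, one_pow, one_div]
  calc tailv a ks i0 ≤ ∑' j, ((a (ks i0) : ℝ))⁻¹ * ((1:ℝ)/2) ^ j :=
        Summable.tsum_le_tsum hterm (tail_summable ha hks0 hks i0) (summable_geometric_two.mul_left _)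
    _ = ((a (ks i0) : ℝ))⁻¹ * 2 := by rw [tsum_mul_left, tsum_geometric_two]

include ha hks0 hks in
lemma smul_x (N i0 : ℕ) (hdvd : ∀ j < i0, a (ks j) ∣ N) :
    ((N : ℤ) • ((xval a ks : ℝ) : AddCircle (1:ℝ))) =
      ((((N : ℝ) * tailv a ks i0 : ℝ)) : AddCircle (1:ℝ)) := by
  have hs := summable_x ha hks0 hks
  have hsplit : (∑ j ∈ Finset.range i0, ((a (ks j) : ℝ))⁻¹) + tailv a ks i0 = xval a ks :=
    hs.sum_add_tsum_nat_add i0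
  have hz : ((N : ℝ) * ∑ j ∈ Finset.range i0, ((a (ks j) : ℝ))⁻¹) =
      ((∑ j ∈ Finset.range i0, N / a (ks j) : ℕ) : ℝ) := by
    have hterm : ∀ j ∈ Finset.range i0, ((N / a (ks j) : ℕ) : ℝ) = (N : ℝ) * ((a (ks j) : ℝ))⁻¹ := by
      intro j hj
      simp only [Finset.mem_range] at hj
      rw [Nat.cast_div (hdvd j hj) (by exact_mod_cast (a_pos ha (ks j)).ne'), div_eq_mul_inv]
    rw [Finset.mul_sum, Nat.cast_sum, Finset.sum_congr rfl hterm]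
  have h1 : ((N : ℤ) • ((xval a ks : ℝ) : AddCircle (1:ℝ))) = ((((N:ℝ) * xval a ks : ℝ)) : AddCircle (1:ℝ)) := by
    rw [← AddCircle.coe_zsmul]
    congr 1
    rw [zsmul_eq_mul]
    push_cast
    ring
  rw [h1, ← hsplit, mul_add, AddCircle.coe_add, hz]
  have h0 : (((((∑ j ∈ Finset.range i0, N / a (ks j) : ℕ) : ℝ)) : AddCircle (1:ℝ))) = 0 := by
    rw [AddCircle.coe_eq_zero_iff]
    exact ⟨(∑ j ∈ Finset.range i0, N / a (ks j) : ℕ), by rw [zsmul_eq_mul, mul_one]; norm_cast⟩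
  rw [h0, zero_add]

end KS

lemma norm_coe_le_self {t : ℝ} (h0 : 0 ≤ t) : ‖((t : ℝ) : AddCircle (1:ℝ))‖ ≤ t := by
  have h1 : ‖((t : ℝ) : AddCircle (1:ℝ))‖ = |t - round t| := by
    rw [AddCircle.norm_eq]
    norm_num
  rw [h1]
  calc |t - round t| ≤ |t - ((0:ℤ):ℝ)| := round_le t 0
    _ = t := by rw [Int.cast_zero, sub_zero, abs_of_nonneg h0]

lemma norm_coe_lower {t : ℝ} (h1 : 1/3 ≤ t) (h2 : t ≤ 9/16) :
    (1/4 : ℝ) ≤ ‖((t : ℝ) : AddCircle (1:ℝ))‖ := by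
  have he : ‖((t : ℝ) : AddCircle (1:ℝ))‖ = |t - round t| := by
    rw [AddCircle.norm_eq]
    norm_num
  rw [he]
  rcases le_or_gt (round t) 0 with hr | hr
  · have hr' : ((round t : ℤ) : ℝ) ≤ 0 := by exact_mod_cast hr
    rw [abs_of_nonneg (by linarith)]
    linarith
  · have hr' : (1:ℝ) ≤ ((round t : ℤ) : ℝ) := by exact_mod_cast hr
    rw [abs_of_nonpos (by linarith)]
    linarith

/-- if `(a n)` is weakly dli then `t^s_{(d n)}(𝕋) ≠ t_{(d n)}(𝕋)`. -/
theorem statChar_ne_charSub_of_weaklyDli (a : ℕ → ℕ) (ha : IsArithSeq a) (h : WeaklyDli a) :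
    statChar (fun n => (dSeq a n : ℤ)) ≠ charSub (fun n => (dSeq a n : ℤ)) := by
  classical
  obtain ⟨A, hAinf, hAd⟩ := h
  have hex : ∀ n : ℕ, ∃ m, m ∈ A ∧ n < m := by
    intro n
    obtain ⟨m, hm, hm'⟩ := hAinf.exists_gt n
    exact ⟨m, hm, hm'⟩
  choose f hfA hflt using hex
  let ks : ℕ → ℕ := fun i => Nat.rec (f 0) (fun _ prev => f (prev + 4)) i
  have hks_succ : ∀ i, ks (i + 1) = f (ks i + 4) := fun i => rfl
  have hksA : ∀ i, ks i ∈ A := by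
    intro i
    cases i with
    | zero => exact hfA 0
    | succ m => exact hfA _
  have hks0 : 1 ≤ ks 0 := by have := hflt 0; show 1 ≤ f 0; omega
  have hks : ∀ i, ks i + 5 ≤ ks (i + 1) := by
    intro i
    have := hflt (ks i + 4)
    rw [hks_succ]
    omega
  have hks_mono : StrictMono ks := strictMono_nat_of_lt_succ (fun i => by have := hks i; omega)
  have hks_ge : ∀ i, i + 1 ≤ ks i := ks_ge hks0 hks
  set X : AddCircle (1:ℝ) := ((xval a ks : ℝ) : AddCircle (1:ℝ)) with hX
  intro heq
  -- Part A : X ∈ statChar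
  have hstat : X ∈ statChar (fun n => (dSeq a n : ℤ)) := by
    intro ε hε
    obtain ⟨M, hM⟩ : ∃ M : ℕ, ((1:ℝ)/2) ^ M < ε / 2 :=
      exists_pow_lt_of_lt_one (by linarith) (by norm_num)
    apply densZero_mono (C := Set.Iio (nseq a (M + 2)) ∪
        ⋃ m ∈ Finset.range (M + 1), liftSet a ((fun x => x - m) '' A))
    · intro n hnB
      simp only [Set.mem_setOf_eq] at hnB
      rcases lt_or_ge n (nseq a (M + 2)) with hlt | hge
      · exact Or.inl hlt
      obtain ⟨k, hk1, hk2⟩ := exists_level ha n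
      have hkM : M + 2 ≤ k := by
        have h1 : nseq a (M + 2) < nseq a (k + 1) := by omega
        have := (nseq_strictMono ha).lt_iff_lt.mp h1
        omega
      obtain ⟨r, hr1, hr2, hdn⟩ := dSeq_block ha hk1 hk2
      have hex2 : ∃ i, k + 1 ≤ ks i := ⟨k + 1, by have := hks_ge (k + 1); omega⟩
      obtain ⟨i0, hi0le, hi0min⟩ : ∃ i0, (k + 1 ≤ ks i0) ∧ ∀ j < i0, ks j ≤ k := by
        refine ⟨@Nat.find _ (fun _ => Nat.decLe _ _) hex2,
          @Nat.find_spec _ (fun _ => Nat.decLe _ _) hex2, fun j hj => ?_⟩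
        have := @Nat.find_min _ (fun _ => Nat.decLe _ _) hex2 j hj
        omega
      have hdvd : ∀ j < i0, a (ks j) ∣ dSeq a n := by
        intro j hj
        have hjk : ks j ≤ k := hi0min j hj
        rw [hdn]
        exact (a_dvd ha hjk).trans (dvd_mul_left (a k) r)
      have hkey := smul_x ha hks0 hks (dSeq a n) i0 hdvd
      have htail := tail_le ha hks0 hks i0
      have htail0 := tail_nonneg (a := a) (ks := ks) i0
      have hdnlt : dSeq a n < a (k + 1) := by
        rw [hdn, ratios_mul ha k]
        exact Nat.mul_lt_mul_of_lt_of_le hr2 le_rfl (a_pos ha k)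
      rcases le_or_gt (k + 1 + M) (ks i0) with hbig | hbig
      · exfalso
        have hb1 : a (k + 1) * 2 ^ M ≤ a (ks i0) :=
          le_trans (a_growth ha (k + 1) M) ((a_mono ha).monotone hbig)
        have hnorm : ‖(dSeq a n : ℤ) • X‖ ≤ (dSeq a n : ℝ) * tailv a ks i0 := by
          rw [hX, hkey]
          exact norm_coe_le_self (by positivity)
        have hb1' : ((a (k + 1) : ℝ)) * 2 ^ M ≤ (a (ks i0) : ℝ) := by exact_mod_cast hb1
        have hpos1 : (0:ℝ) < (a (k + 1) : ℝ) := by exact_mod_cast a_pos ha (k + 1)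
        have hpos2 : (0:ℝ) < (a (ks i0) : ℝ) := by exact_mod_cast a_pos ha (ks i0)
        have hsmall : (dSeq a n : ℝ) * tailv a ks i0 < ε := by
          have hstep1 : (dSeq a n : ℝ) * tailv a ks i0 ≤
              (a (k + 1) : ℝ) * (((a (ks i0) : ℝ))⁻¹ * 2) := by
            apply mul_le_mul (by exact_mod_cast hdnlt.le) htail htail0 hpos1.le
          have hstep2 : (a (k + 1) : ℝ) * (((a (ks i0) : ℝ))⁻¹ * 2) ≤ ((1:ℝ)/2) ^ M * 2 := by
            have hinv : ((a (ks i0) : ℝ))⁻¹ ≤ (((a (k + 1) : ℝ)) * 2 ^ M)⁻¹ :=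
              inv_anti₀ (by positivity) hb1'
            calc (a (k + 1) : ℝ) * (((a (ks i0) : ℝ))⁻¹ * 2)
                ≤ (a (k + 1) : ℝ) * ((((a (k + 1) : ℝ)) * 2 ^ M)⁻¹ * 2) := by
                  apply mul_le_mul_of_nonneg_left _ hpos1.le
                  apply mul_le_mul_of_nonneg_right hinv (by norm_num)
              _ = ((1:ℝ)/2) ^ M * 2 := by
                  rw [mul_inv]
                  field_simp
                  rw [← mul_pow]; norm_num
          have : ((1:ℝ)/2) ^ M * 2 < ε := by
            have := hM
            nlinarith
          linarith
        linarith
      · right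
        simp only [Set.mem_iUnion, exists_prop]
        have hk1pos : 1 ≤ k := by omega
        rcases eq_or_lt_of_le hk1 with heqn | hltn
        · -- n + 1 = nseq a k ; block element k
          refine ⟨ks i0 - k, ?_, ?_⟩
          · simp only [Finset.mem_range]
            omega
          · simp only [liftSet, Set.mem_iUnion, exists_prop]
            refine ⟨k, ⟨ks i0, hksA i0, show ks i0 - (ks i0 - k) = k by omega⟩, ?_⟩
            simp only [Set.mem_Icc]
            constructor
            · have := nseq_strictMono ha (show k - 1 < k by omega)
              omega
            · omega
        · -- nseq a k ≤ n ; block element k+1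
          refine ⟨ks i0 - (k + 1), ?_, ?_⟩
          · simp only [Finset.mem_range]
            omega
          · simp only [liftSet, Set.mem_iUnion, exists_prop]
            refine ⟨k + 1, ⟨ks i0, hksA i0, show ks i0 - (ks i0 - (k + 1)) = k + 1 by omega⟩, ?_⟩
            simp only [Set.mem_Icc, Nat.add_sub_cancel]
            omega
    · exact densZero_union (densZero_finite (Set.finite_Iio _))
        (densZero_biUnion (fun m _ => hAd m))
  -- Part B : X ∉ charSub
  have hchar : X ∈ charSub (fun n => (dSeq a n : ℤ)) := by
    rw [← heq]; exact hstat
  have hev : ∀ᶠ n in atTop, ‖(dSeq a n : ℤ) • X‖ < 1/4 := by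
    have h4 := hchar.eventually (Metric.ball_mem_nhds (0 : AddCircle (1:ℝ)) (by norm_num : (0:ℝ) < 1/4))
    filter_upwards [h4] with n hn
    rwa [dist_zero_right] at hn
  obtain ⟨N0, hN0⟩ := eventually_atTop.mp hev
  -- pick i large and derive contradiction
  set i : ℕ := dSeq a N0 + 1 with hidef
  have hki1 : 1 ≤ ks i := by have := hks_ge i; omega
  set k' : ℕ := ks i - 1 with hk'def
  have hki : ks i = k' + 1 := by omega
  set b : ℕ := ratios a (k' + 1) with hbdef
  have hb2 : 2 ≤ b := two_le_ratios ha k'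
  set r : ℕ := b / 2 with hrdef
  have hr1 : 1 ≤ r := by omega
  have hr2 : r < b := by omega
  set s : ℕ := r * a k' with hsdef
  have hsP : dPred a s := ⟨k', r, hr1, hr2, rfl⟩
  have hcount : Nat.nth (dPred a) (Nat.count (dPred a) s) = s := Nat.nth_count hsP
  -- index is large
  have hs_large : dSeq a N0 < s := by
    have h1 : a k' ≤ s := Nat.le_mul_of_pos_left _ hr1
    have h2 : ks i ≤ 2 ^ k' := by
      have := Nat.lt_two_pow_self (n := k')
      have hke : k' + 1 ≤ 2 ^ k' + 1 := by omega
      omega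
    have h3 : 2 ^ k' ≤ a k' := two_pow_le ha k'
    have h4 : i + 1 ≤ ks i := hks_ge i
    omega
  have hidx : N0 ≤ Nat.count (dPred a) s := by
    have h1 : Nat.count (dPred a) (Nat.nth (dPred a) N0 + 1) = N0 + 1 :=
      Nat.count_nth_succ_of_infinite (dPred_infinite ha) N0
    have h2 : Nat.nth (dPred a) N0 + 1 ≤ s := by
      rw [← dSeq_eq] at *
      omega
    have h3 := Nat.count_monotone (dPred a) h2
    omega
  have hsmall := hN0 (Nat.count (dPred a) s) hidx
  rw [dSeq_eq, hcount] at hsmall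
  -- now show ‖(s:ℤ) • X‖ ≥ 1/4
  have hdvd : ∀ j < i, a (ks j) ∣ s := by
    intro j hj
    have hjk : ks j ≤ k' := by
      have := hks_mono hj
      omega
    exact (a_dvd ha hjk).trans (dvd_mul_left (a k') r)
  have hkey := smul_x ha hks0 hks s i hdvd
  -- split the tail
  have hsplit : tailv a ks i = ((a (ks i) : ℝ))⁻¹ + tailv a ks (i + 1) := by
    have hsumm := tail_summable ha hks0 hks i
    have h0 := hsumm.tsum_eq_zero_add
    have hshift : (fun j : ℕ => ((a (ks (j + 1 + i)) : ℝ))⁻¹) =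
        (fun j : ℕ => ((a (ks (j + (i + 1))) : ℝ))⁻¹) := by
      funext j
      have hje : j + 1 + i = j + (i + 1) := by omega
      rw [hje]
    calc tailv a ks i = ((a (ks (0 + i)) : ℝ))⁻¹ + ∑' j, ((a (ks (j + 1 + i)) : ℝ))⁻¹ := h0
      _ = ((a (ks i) : ℝ))⁻¹ + tailv a ks (i + 1) := by
          rw [show (0:ℕ) + i = i from by omega, hshift]
          rfl
  have hak'pos : (0:ℝ) < (a k' : ℝ) := by exact_mod_cast a_pos ha k'
  have hbpos : (0:ℝ) < (b : ℝ) := by positivity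
  have hfrac : (s : ℝ) * ((a (ks i) : ℝ))⁻¹ = (r : ℝ) / (b : ℝ) := by
    rw [hsdef, hki]
    have : a (k' + 1) = b * a k' := ratios_mul ha k'
    rw [this]
    push_cast
    field_simp
  -- tail bound
  have htail1 : (s : ℝ) * tailv a ks (i + 1) ≤ 1/16 := by
    have hs_le : (s : ℝ) ≤ (a (ks i) : ℝ) := by
      have : s < a (k' + 1) := by
        rw [ratios_mul ha k']
        exact Nat.mul_lt_mul_of_lt_of_le hr2 le_rfl (a_pos ha k')
      rw [hki]
      exact_mod_cast this.le
    have h32 : a (ks i) * 32 ≤ a (ks (i + 1)) := by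
      have h1 : a (ks i) * 2 ^ 5 ≤ a (ks i + 5) := a_growth ha (ks i) 5
      have h2 : a (ks i + 5) ≤ a (ks (i + 1)) := (a_mono ha).monotone (hks i)
      norm_num at h1
      omega
    have h32' : ((a (ks i) : ℝ)) * 32 ≤ (a (ks (i + 1)) : ℝ) := by exact_mod_cast h32
    have hkspos : (0:ℝ) < (a (ks i) : ℝ) := by exact_mod_cast a_pos ha (ks i)
    have htl := tail_le ha hks0 hks (i + 1)
    have htl0 := tail_nonneg (a := a) (ks := ks) (i + 1)
    have hinv : ((a (ks (i + 1)) : ℝ))⁻¹ ≤ (((a (ks i) : ℝ)) * 32)⁻¹ :=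
      inv_anti₀ (by positivity) h32'
    calc (s : ℝ) * tailv a ks (i + 1) ≤ (a (ks i) : ℝ) * tailv a ks (i + 1) := by
          apply mul_le_mul_of_nonneg_right hs_le htl0
      _ ≤ (a (ks i) : ℝ) * (((a (ks (i + 1)) : ℝ))⁻¹ * 2) := by
          apply mul_le_mul_of_nonneg_left htl hkspos.le
      _ ≤ (a (ks i) : ℝ) * ((((a (ks i) : ℝ)) * 32)⁻¹ * 2) := by
          apply mul_le_mul_of_nonneg_left _ hkspos.le
          apply mul_le_mul_of_nonneg_right hinv (by norm_num)
      _ = 1/16 := by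
          rw [mul_inv]
          field_simp
          ring
  have htail1' : 0 ≤ (s : ℝ) * tailv a ks (i + 1) := by
    have := tail_nonneg (a := a) (ks := ks) (i + 1)
    positivity
  -- fraction bounds
  have hfrac_lb : (1:ℝ)/3 ≤ (r : ℝ) / (b : ℝ) := by
    have h3r : b ≤ 3 * r := by omega
    have h3r' : (b : ℝ) ≤ 3 * (r : ℝ) := by exact_mod_cast h3r
    rw [le_div_iff₀ hbpos]
    linarith
  have hfrac_ub : (r : ℝ) / (b : ℝ) ≤ 1/2 := by
    have h2r : 2 * r ≤ b := by omega
    have h2r' : 2 * (r : ℝ) ≤ (b : ℝ) := by exact_mod_cast h2r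
    rw [div_le_iff₀ hbpos]
    linarith
  have hy : (s : ℝ) * tailv a ks i = (r : ℝ) / (b : ℝ) + (s : ℝ) * tailv a ks (i + 1) := by
    rw [hsplit, mul_add, hfrac]
  have hlower : (1/4 : ℝ) ≤ ‖(s : ℤ) • X‖ := by
    rw [hX, hkey]
    apply norm_coe_lower
    · rw [hy]; linarith
    · rw [hy]; linarith
  push_cast at hsmall hlower
  linarith
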